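/- Let ≥_* be a preorder on ℝ^Ω satisfying conditions (i)–(v). Then for every bounded f : Ω → ℝ with f ≥ 0 pointwise, inf_{g ∈ [f]_*} sup_{ω∈Ω} g(ω) = inf_{N ∈ 𝒩_*} sup_{ω ∈ Ω \ N} f(ω). Consequently, for every family 𝓑 of subsets of Ω, I_*(𝓑) = I_{𝒩_*}(𝓑). -/
import Mathlib


/-- `sFun β = (1/|β|) ∑_{B ∈ β} 1_B` for a finite sequence (list) of sets `β`. -/
noncomputable def sFun {Ω : Type*} (β : List (Set Ω)) : Ω → ℝ := fun ω =>
  (β.map fun B => B.indicator (fun _ => (1 : ℝ)) ω).sum / β.length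

/-- A finitely additive probability on the algebra of all subsets of `Ω`. -/
def IsFAProbAll {Ω : Type*} (m : Set Ω → ℝ) : Prop :=
  (∀ A : Set Ω, 0 ≤ m A) ∧ m Set.univ = 1 ∧
    ∀ A B : Set Ω, Disjoint A B → m (A ∪ B) = m A + m B

/-- `f ≥ g` `m`-almost surely: `inf_{t > 0} m({f - g < -t}) = 0`. -/
def AlmostGE {Ω : Type*} (m : Set Ω → ℝ) (f g : Ω → ℝ) : Prop :=
  sInf {r | ∃ t : ℝ, 0 < t ∧ r = m {ω | f ω - g ω < -t}} = 0

/-- `𝒩_* = {A ⊆ Ω : 0 ≥_* 1_A}`, the null sets of the ranking `R` (where `R f g`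
stands for `f ≥_* g`). -/
def NstarSet {Ω : Type*} (R : (Ω → ℝ) → (Ω → ℝ) → Prop) : Set (Set Ω) :=
  {A : Set Ω | R 0 (A.indicator fun _ => (1 : ℝ))}

/-- Conditions (i)–(v) on the ranking `R` (where `R f g` stands for `f ≥_* g`):
(i) not `0 >_* 1`; (ii) `f ≥_* 0` and `a > 0` imply `f ⊓ a ≥_* 0`;
(iii) `f ≥ 0` pointwise implies `f ≥_* 0`; (iv) `f ≥_* g` implies
`b·f + h ≥_* b·g + h` for every bounded pointwise-positive `b` and every `h`;
(v) if `f + ε ≥_* 0` for all `ε > 0` then `f ≥_* 0`. -/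
def StarConds {Ω : Type*} (R : (Ω → ℝ) → (Ω → ℝ) → Prop) : Prop :=
  (¬ (R 0 1 ∧ ¬ R 1 0)) ∧
    (∀ f : Ω → ℝ, ∀ a : ℝ, R f 0 → 0 < a → R (fun ω => min (f ω) a) 0) ∧
    (∀ f : Ω → ℝ, 0 ≤ f → R f 0) ∧
    (∀ f g b h : Ω → ℝ, R f g → (∀ ω, 0 < b ω) → (∃ C : ℝ, ∀ ω, b ω ≤ C) →
      R (b * f + h) (b * g + h)) ∧
    (∀ f : Ω → ℝ, (∀ ε : ℝ, 0 < ε → R (f + fun _ => ε) 0) → R f 0)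

/-- `I_*(𝓑)`: the infimum, over nonempty finite sequences `β` from `𝓑` and over
`g` that are `≥_*`-equivalent to `s(β)`, of `sup_ω g(ω)` (computed in `EReal`). -/
noncomputable def interNumStar {Ω : Type*} (R : (Ω → ℝ) → (Ω → ℝ) → Prop)
    (𝓑 : Set (Set Ω)) : EReal :=
  sInf {r : EReal | ∃ β : List (Set Ω), β ≠ [] ∧ (∀ B ∈ β, B ∈ 𝓑) ∧
    ∃ g : Ω → ℝ, R g (sFun β) ∧ R (sFun β) g ∧ r = ⨆ ω, (g ω : EReal)}

/-- `I_𝒩(𝓑)`: the infimum over nonempty finite sequences `β` from `𝓑` and `N ∈ 𝒩`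
of `sup_{ω ∈ Ω \ N} s(β)(ω)` (computed in `EReal`). -/
noncomputable def interNumIdeal {Ω : Type*} (𝒩 𝓑 : Set (Set Ω)) : EReal :=
  sInf {r : EReal | ∃ β : List (Set Ω), β ≠ [] ∧ (∀ B ∈ β, B ∈ 𝓑) ∧
    ∃ N ∈ 𝒩, r = ⨆ ω ∈ Nᶜ, (sFun β ω : EReal)}

lemma R_pt {Ω : Type*} {R : (Ω → ℝ) → (Ω → ℝ) → Prop} (hc : StarConds R)
    {p q : Ω → ℝ} (h : ∀ ω, q ω ≤ p ω) : R p q := by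
  have h3 : R (p - q) 0 := hc.2.2.1 (p - q) (by intro ω; simp [sub_nonneg, h ω])
  have h4 := hc.2.2.2.1 (p - q) 0 1 q h3 (fun ω => one_pos) ⟨1, fun ω => le_refl 1⟩
  have e1 : (1 : Ω → ℝ) * (p - q) + q = p := by funext ω; simp
  have e2 : (1 : Ω → ℝ) * 0 + q = q := by funext ω; simp
  rwa [e1, e2] at h4

lemma R_shift {Ω : Type*} {R : (Ω → ℝ) → (Ω → ℝ) → Prop} (hc : StarConds R)
    {p q : Ω → ℝ} (h : R p q) (k : Ω → ℝ) : R (p + k) (q + k) := by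
  have h4 := hc.2.2.2.1 p q 1 k h (fun ω => one_pos) ⟨1, fun ω => le_refl 1⟩
  have e1 : (1 : Ω → ℝ) * p + k = p + k := by funext ω; simp
  have e2 : (1 : Ω → ℝ) * q + k = q + k := by funext ω; simp
  rwa [e1, e2] at h4

lemma R_scale {Ω : Type*} {R : (Ω → ℝ) → (Ω → ℝ) → Prop} (hc : StarConds R)
    {p q : Ω → ℝ} (h : R p q) {c : ℝ} (hcp : 0 < c) :
    R (fun ω => c * p ω) (fun ω => c * q ω) := by
  have h4 := hc.2.2.2.1 p q (fun _ => c) 0 h (fun _ => hcp) ⟨c, fun _ => le_rfl⟩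
  have e1 : (fun _ : Ω => c) * p + 0 = fun ω => c * p ω := by funext ω; simp
  have e2 : (fun _ : Ω => c) * q + 0 = fun ω => c * q ω := by funext ω; simp
  rwa [e1, e2] at h4

lemma null_lemma {Ω : Type*} {R : (Ω → ℝ) → (Ω → ℝ) → Prop}
    (htrans : Transitive R) (hc : StarConds R)
    {g f : Ω → ℝ} (hgf : R g f) {M ε : ℝ} (hε : 0 < ε) (hgM : ∀ ω, g ω ≤ M) :
    {ω | M + ε < f ω} ∈ NstarSet R := by
  set N : Set Ω := {ω | M + ε < f ω} with hNdef
  set χ : Ω → ℝ := N.indicator (fun _ => 1) with hχdef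
  have h1 : R (g - f) 0 := by
    have h := R_shift hc hgf (-f)
    have e1 : g + (-f) = g - f := by funext ω; simp [sub_eq_add_neg]
    have e2 : f + (-f) = (0 : Ω → ℝ) := by funext ω; simp
    rwa [e1, e2] at h
  have key : ∀ ε' : ℝ, 0 < ε' → R ((fun ω => -χ ω) + fun _ => ε') 0 := by
    intro ε' hε'
    have eq0 : ((fun ω => -χ ω) + fun _ => ε') = fun ω => ε' - χ ω := by
      funext ω; simp [sub_eq_add_neg, add_comm]
    rw [eq0]
    have hχ01 : ∀ ω, 0 ≤ χ ω ∧ χ ω ≤ 1 := by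
      intro ω
      by_cases h : ω ∈ N <;> simp [hχdef, Set.indicator_apply, h]
    rcases le_or_gt 1 ε' with h1' | h1'
    · exact R_pt hc (fun ω => by have := (hχ01 ω).2; simp; linarith)
    · have h1ε' : 0 < 1 - ε' := by linarith
      set δ : ℝ := ε * ε' / (1 - ε') with hδdef
      have hδ : 0 < δ := by positivity
      have h2 : R (fun ω => min ((g - f) ω) δ) 0 := hc.2.1 _ δ h1 hδ
      have h3 : ∀ ω, min ((g - f) ω) δ ≤ δ - (δ + ε) * χ ω := by
        intro ω
        by_cases hω : ω ∈ N
        · have hχ1 : χ ω = 1 := by simp [hχdef, Set.indicator_of_mem hω]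
          have hfω : M + ε < f ω := hω
          have : (g - f) ω ≤ -ε := by
            have := hgM ω; simp only [Pi.sub_apply]; linarith
          calc min ((g - f) ω) δ ≤ (g - f) ω := min_le_left _ _
            _ ≤ -ε := this
            _ = δ - (δ + ε) * 1 := by ring
            _ = δ - (δ + ε) * χ ω := by rw [hχ1]
        · have hχ0 : χ ω = 0 := by simp [hχdef, Set.indicator_of_notMem hω]
          rw [hχ0]
          simpa using min_le_right ((g - f) ω) δ
      have h4 : R (fun ω => δ - (δ + ε) * χ ω) 0 :=
        htrans (R_pt hc h3) h2
      have h5 := R_scale hc h4 (c := (1 - ε') / ε) (by positivity)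
      have e : (fun ω => (1 - ε') / ε * ((fun ω => δ - (δ + ε) * χ ω) ω))
          = fun ω => ε' - χ ω := by
        funext ω
        simp only [hδdef]
        field_simp
        ring
      have e0 : (fun ω => (1 - ε') / ε * ((0 : Ω → ℝ) ω)) = (0 : Ω → ℝ) := by
        funext ω; simp
      rwa [e, e0] at h5
  have h6 : R (fun ω => -χ ω) 0 := hc.2.2.2.2 _ key
  have h7 := R_shift hc h6 χ
  have e1 : (fun ω => -χ ω) + χ = (0 : Ω → ℝ) := by funext ω; simp
  have e2 : (0 : Ω → ℝ) + χ = χ := by funext ω; simp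
  rw [e1, e2] at h7
  exact h7

/-- If `≥_*` satisfies (i)–(v) then, for every bounded nonnegative `f`,
`inf_{g ∈ [f]_*} sup_ω g(ω) = inf_{N ∈ 𝒩_*} sup_{ω ∈ Ω \ N} f(ω)`; consequently
`I_* = I_{𝒩_*}` on every family `𝓑` of subsets of `Ω`. -/
theorem interNumStar_eq_interNumIdeal {Ω : Type*} [Nonempty Ω]
    (R : (Ω → ℝ) → (Ω → ℝ) → Prop) (hrefl : Reflexive R) (htrans : Transitive R)
    (hc : StarConds R) :
    (∀ f : Ω → ℝ, (∃ C : ℝ, ∀ ω, |f ω| ≤ C) → 0 ≤ f →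
      sInf {r : EReal | ∃ g : Ω → ℝ, R g f ∧ R f g ∧ r = ⨆ ω, (g ω : EReal)} =
        sInf {r : EReal | ∃ N ∈ NstarSet R, r = ⨆ ω ∈ Nᶜ, (f ω : EReal)}) ∧
      ∀ 𝓑 : Set (Set Ω), interNumStar R 𝓑 = interNumIdeal (NstarSet R) 𝓑 := by
  have part1 : ∀ f : Ω → ℝ, (∃ C : ℝ, ∀ ω, |f ω| ≤ C) → 0 ≤ f →
      sInf {r : EReal | ∃ g : Ω → ℝ, R g f ∧ R f g ∧ r = ⨆ ω, (g ω : EReal)} =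
        sInf {r : EReal | ∃ N ∈ NstarSet R, r = ⨆ ω ∈ Nᶜ, (f ω : EReal)} := by
    intro f hfb hf0
    obtain ⟨C, hC⟩ := hfb
    have hC0 : 0 ≤ C := le_trans (abs_nonneg _) (hC (Classical.arbitrary Ω))
    apply le_antisymm
    · -- sInf S1 ≤ sInf S2
      apply le_sInf
      rintro r ⟨N, hN, rfl⟩
      by_cases hNc : Nᶜ.Nonempty
      · obtain ⟨ω₀, hω₀⟩ := hNc
        set g : Ω → ℝ := Nᶜ.indicator f with hgdef
        have hgval : ∀ ω, (ω ∈ N → g ω = 0) ∧ (ω ∉ N → g ω = f ω) := by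
          intro ω
          constructor
          · intro h
            exact Set.indicator_of_notMem (by simpa using h) f
          · intro h
            exact Set.indicator_of_mem (by simpa using h) f
        have hfg : R f g := by
          apply R_pt hc
          intro ω
          by_cases h : ω ∈ N
          · rw [(hgval ω).1 h]; exact hf0 ω
          · rw [(hgval ω).2 h]
        have hgf : R g f := by
          have h0 : R 0 (N.indicator fun _ => (1 : ℝ)) := hN
          have h1 := R_scale hc h0 (c := C + 1) (by linarith)
          have e0 : (fun ω => (C + 1) * (0 : Ω → ℝ) ω) = (0 : Ω → ℝ) := by
            funext ω; simp
          rw [e0] at h1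
          have h2 := R_shift hc h1 g
          have e1 : (0 : Ω → ℝ) + g = g := by funext ω; simp
          rw [e1] at h2
          refine htrans h2 (R_pt hc ?_)
          intro ω
          by_cases h : ω ∈ N
          · simp only [Pi.add_apply, Set.indicator_of_mem h]
            rw [(hgval ω).1 h]
            have := (abs_le.mp (hC ω)).2
            linarith
          · simp only [Pi.add_apply, Set.indicator_of_notMem h]
            rw [(hgval ω).2 h]; simp
        have hmem : (⨆ ω, (g ω : EReal)) ∈
            {r : EReal | ∃ g : Ω → ℝ, R g f ∧ R f g ∧ r = ⨆ ω, (g ω : EReal)} :=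
          ⟨g, hgf, hfg, rfl⟩
        refine (sInf_le hmem).trans ?_
        apply iSup_le
        intro ω
        by_cases h : ω ∈ N
        · have : (g ω : EReal) = ((0 : ℝ) : EReal) := by
            rw [(hgval ω).1 h]
          rw [this]
          calc ((0 : ℝ) : EReal) ≤ (f ω₀ : EReal) := by exact_mod_cast hf0 ω₀
            _ ≤ ⨆ ω ∈ Nᶜ, (f ω : EReal) :=
                le_iSup₂ (f := fun ω (_ : ω ∈ Nᶜ) => (f ω : EReal)) ω₀ hω₀
        · have : (g ω : EReal) = (f ω : EReal) := by rw [(hgval ω).2 h]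
          rw [this]
          exact le_iSup₂ (f := fun ω (_ : ω ∈ Nᶜ) => (f ω : EReal)) ω h
      · -- Nᶜ empty : RHS is ⊥
        have hNuniv : N = Set.univ := by
          rw [Set.not_nonempty_iff_eq_empty] at hNc
          rw [← Set.compl_empty, ← hNc, compl_compl]
        have hbot : (⨆ ω ∈ Nᶜ, (f ω : EReal)) = ⊥ := by
          simp [hNuniv]
        rw [hbot, le_bot_iff, EReal.eq_bot_iff_forall_lt]
        intro y
        set t : ℝ := max 1 (C - y + 1) with htdef
        have ht : 0 < t := lt_of_lt_of_le one_pos (le_max_left _ _)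
        set g : Ω → ℝ := fun ω => f ω - t with hgdef
        have hone : R 0 (1 : Ω → ℝ) := by
          have h0 : R 0 (N.indicator fun _ => (1 : ℝ)) := hN
          have : (N.indicator fun _ => (1 : ℝ)) = (1 : Ω → ℝ) := by
            funext ω; simp [hNuniv]
          rwa [this] at h0
        have hgf : R g f := by
          have h1 := R_scale hc hone (c := t) ht
          have e0 : (fun ω => t * (0 : Ω → ℝ) ω) = (0 : Ω → ℝ) := by
            funext ω; simp
          rw [e0] at h1
          have h2 := R_shift hc h1 g
          have e1 : (0 : Ω → ℝ) + g = g := by funext ω; simp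
          have e2 : (fun ω => t * (1 : Ω → ℝ) ω) + g = f := by
            funext ω; simp [hgdef]
          rwa [e1, e2] at h2
        have hfg : R f g := R_pt hc (fun ω => by simp [hgdef]; linarith)
        have hmem : (⨆ ω, (g ω : EReal)) ∈
            {r : EReal | ∃ g : Ω → ℝ, R g f ∧ R f g ∧ r = ⨆ ω, (g ω : EReal)} :=
          ⟨g, hgf, hfg, rfl⟩
        refine lt_of_le_of_lt ((sInf_le hmem).trans ?_) (show ((C - t : ℝ) : EReal) < y from ?_)
        · apply iSup_le
          intro ω
          have : g ω ≤ C - t := by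
            have := (abs_le.mp (hC ω)).2
            simp [hgdef]; linarith
          exact_mod_cast this
        · have : C - t < y := by
            have := le_max_right 1 (C - y + 1)
            simp only [htdef]
            linarith [le_max_right 1 (C - y + 1)]
          exact_mod_cast this
    · -- sInf S2 ≤ sInf S1
      apply le_sInf
      rintro r ⟨g, hgf, hfg, rfl⟩
      rcases eq_top_or_lt_top (⨆ ω, (g ω : EReal)) with htop | htop
      · rw [htop]; exact le_top
      · have hbot : ⊥ < ⨆ ω, (g ω : EReal) :=
          lt_of_lt_of_le (EReal.bot_lt_coe _)
            (le_iSup (fun ω => (g ω : EReal)) (Classical.arbitrary Ω))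
        set M := (⨆ ω, (g ω : EReal)).toReal with hMdef
        have hMr : ((M : ℝ) : EReal) = ⨆ ω, (g ω : EReal) :=
          EReal.coe_toReal htop.ne hbot.ne'
        have hgM : ∀ ω, g ω ≤ M := by
          intro ω
          have h := le_iSup (fun ω => (g ω : EReal)) ω
          rw [← hMr] at h
          exact_mod_cast h
        rw [← hMr, ← EReal.le_of_forall_lt_iff_le]
        intro z hz
        have hzM : M < z := by exact_mod_cast hz
        have hε : (0 : ℝ) < z - M := by linarith
        have hN := null_lemma htrans hc hgf hε hgM
        have hmem2 : (⨆ ω ∈ {ω | M + (z - M) < f ω}ᶜ, (f ω : EReal)) ∈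
            {r : EReal | ∃ N ∈ NstarSet R, r = ⨆ ω ∈ Nᶜ, (f ω : EReal)} :=
          ⟨_, hN, rfl⟩
        refine (sInf_le hmem2).trans ?_
        apply iSup₂_le
        intro ω hω
        have : f ω ≤ z := by
          have hω' : ¬ (M + (z - M) < f ω) := hω
          push_neg at hω'
          linarith
        exact_mod_cast this
  refine ⟨part1, fun 𝓑 => ?_⟩
  have hsb : ∀ β : List (Set Ω), β ≠ [] →
      ((∃ C : ℝ, ∀ ω, |sFun β ω| ≤ C) ∧ 0 ≤ sFun β) := by
    intro β hβ
    have hlen : (0 : ℝ) < β.length := by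
      have : β.length ≠ 0 := fun h => hβ (List.length_eq_zero_iff.mp h)
      exact_mod_cast Nat.pos_of_ne_zero this
    have hnn : ∀ ω, 0 ≤ sFun β ω := by
      intro ω
      apply div_nonneg _ (le_of_lt hlen)
      apply List.sum_nonneg
      intro x hx
      obtain ⟨B, _, rfl⟩ := List.mem_map.mp hx
      exact Set.indicator_nonneg (fun _ _ => zero_le_one) ω
    have hub : ∀ ω, sFun β ω ≤ 1 := by
      intro ω
      rw [sFun, div_le_one hlen]
      have := List.sum_le_card_nsmul (β.map fun B => B.indicator (fun _ => (1 : ℝ)) ω) 1 ?_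
      · simpa using this
      · intro x hx
        obtain ⟨B, _, rfl⟩ := List.mem_map.mp hx
        by_cases h : ω ∈ B <;> simp [Set.indicator_apply, h]
    exact ⟨⟨1, fun ω => abs_le.mpr ⟨by linarith [hnn ω], hub ω⟩⟩, fun ω => hnn ω⟩
  apply le_antisymm
  · apply le_sInf
    rintro r ⟨β, hβne, hβ𝓑, N, hN, rfl⟩
    obtain ⟨hfb, hf0⟩ := hsb β hβne
    calc interNumStar R 𝓑
        ≤ sInf {r : EReal | ∃ g : Ω → ℝ, R g (sFun β) ∧ R (sFun β) g ∧
            r = ⨆ ω, (g ω : EReal)} := by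
          apply sInf_le_sInf
          rintro r ⟨g, h1, h2, h3⟩
          exact ⟨β, hβne, hβ𝓑, g, h1, h2, h3⟩
      _ = sInf {r : EReal | ∃ N ∈ NstarSet R, r = ⨆ ω ∈ Nᶜ, (sFun β ω : EReal)} :=
          part1 _ hfb hf0
      _ ≤ _ := sInf_le ⟨N, hN, rfl⟩
  · apply le_sInf
    rintro r ⟨β, hβne, hβ𝓑, g, h1, h2, h3⟩
    obtain ⟨hfb, hf0⟩ := hsb β hβne
    calc interNumIdeal (NstarSet R) 𝓑
        ≤ sInf {r : EReal | ∃ N ∈ NstarSet R, r = ⨆ ω ∈ Nᶜ, (sFun β ω : EReal)} := by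
          apply sInf_le_sInf
          rintro r ⟨N, hN, h4⟩
          exact ⟨β, hβne, hβ𝓑, N, hN, h4⟩
      _ = sInf {r : EReal | ∃ g : Ω → ℝ, R g (sFun β) ∧ R (sFun β) g ∧
            r = ⨆ ω, (g ω : EReal)} := (part1 _ hfb hf0).symm
      _ ≤ _ := sInf_le ⟨g, h1, h2, h3⟩
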